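/- Under these assumptions, the Hessian matrix V₂ of E at 0 is symmetric and satisfies the Riccati equation Aᵀ V₂ + V₂ A − η · Cᵀ C + V₂ B Bᵀ V₂ = 0. (Quadratic-coefficient part of Theorem 7.) -/

import Mathlib

open Matrix
open scoped RealInnerProductSpace

noncomputable section

/-- Reinterpret a plain vector in `Fin n → ℝ` as an element of Euclidean space. -/
def toEuc {n : ℕ} (v : Fin n → ℝ) : EuclideanSpace ℝ (Fin n) := WithLp.toLp 2 v

/-- A matrix as a continuous linear map between Euclidean spaces. -/
def matCLM {a b : ℕ} (M : Matrix (Fin a) (Fin b) ℝ) :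
    EuclideanSpace ℝ (Fin b) →L[ℝ] EuclideanSpace ℝ (Fin a) :=
  LinearMap.toContinuousLinearMap (Matrix.toEuclideanLin M)

lemma matCLM_apply {a b : ℕ} (M : Matrix (Fin a) (Fin b) ℝ) (v : EuclideanSpace ℝ (Fin b)) :
    matCLM M v = toEuc (M.mulVec v) := rfl

lemma toEuc_mulVec_smul {a b : ℕ} (M : Matrix (Fin a) (Fin b) ℝ) (t : ℝ)
    (v : EuclideanSpace ℝ (Fin b)) :
    toEuc (M.mulVec (t • v)) = t • toEuc (M.mulVec v) :=
  (matCLM M).map_smul t v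

lemma inner_toEuc {n : ℕ} (u v : Fin n → ℝ) : ⟪toEuc u, toEuc v⟫ = u ⬝ᵥ v := by
  simp [toEuc, PiLp.inner_apply, dotProduct, mul_comm]

lemma norm_toEuc_sq {n : ℕ} (u : Fin n → ℝ) : ‖toEuc u‖ ^ 2 = u ⬝ᵥ u := by
  rw [← real_inner_self_eq_norm_sq]; exact inner_toEuc u u

set_option maxHeartbeats 1000000 in
/-- Quadratic-coefficient part of Theorem 7: the Hessian `V₂` of a solution `E`
of the past H∞ HJB equation is symmetric and solves the Riccati equation
`AᵀV₂ + V₂A - η CᵀC + V₂BBᵀV₂ = 0`. -/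
theorem past_energy_quadratic_coefficient
    {n m p : ℕ}
    (A : Matrix (Fin n) (Fin n) ℝ) (B : Matrix (Fin n) (Fin m) ℝ)
    (C : Matrix (Fin p) (Fin n) ℝ)
    (N : EuclideanSpace ℝ (Fin n) →L[ℝ] EuclideanSpace ℝ (Fin n) →L[ℝ] EuclideanSpace ℝ (Fin n))
    (η : ℝ)
    (E : EuclideanSpace ℝ (Fin n) → ℝ)
    (hE : AnalyticAt ℝ E 0)
    (hE0 : E 0 = 0)
    (hdE : fderiv ℝ E 0 = 0)
    (hHJB : ∀ᶠ x in nhds (0 : EuclideanSpace ℝ (Fin n)),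
      ⟪gradient E x, toEuc (A.mulVec x) + N x x⟫
        + (1 / 2) * ‖toEuc (Bᵀ.mulVec (gradient E x : EuclideanSpace ℝ (Fin n)))‖ ^ 2
        - (η / 2) * ‖toEuc (C.mulVec x)‖ ^ 2 = 0)
    (V₂ : Matrix (Fin n) (Fin n) ℝ)
    (hV₂ : ∀ i j, V₂ i j =
      iteratedFDeriv ℝ 2 E 0 ![EuclideanSpace.single i 1, EuclideanSpace.single j 1]) :
    V₂ᵀ = V₂ ∧ Aᵀ * V₂ + V₂ * A - η • (Cᵀ * C) + V₂ * B * Bᵀ * V₂ = 0 := by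
  classical
  set ℓ : StrongDual ℝ (EuclideanSpace ℝ (Fin n)) →L[ℝ] EuclideanSpace ℝ (Fin n) :=
    (InnerProductSpace.toDual ℝ (EuclideanSpace ℝ (Fin n))).symm.toContinuousLinearEquiv.toContinuousLinearMap with hℓ
  set D : EuclideanSpace ℝ (Fin n) →L[ℝ] StrongDual ℝ (EuclideanSpace ℝ (Fin n)) :=
    fderiv ℝ (fderiv ℝ E) 0 with hDdef
  have hD : HasFDerivAt (fderiv ℝ E) D 0 := (hE.fderiv.differentiableAt).hasFDerivAt
  have hgF : HasFDerivAt (fun x => gradient E x) (ℓ.comp D) 0 := ℓ.hasFDerivAt.comp 0 hD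
  have hg0 : gradient E 0 = 0 := by unfold gradient; rw [hdE]; simp
  have hsym : ∀ v w, D v w = D w v := by
    intro v w
    exact (hE.contDiffAt (n := 2)).isSymmSndFDerivAt (by simp) v w
  have hV₂' : ∀ i j, V₂ i j = D (EuclideanSpace.single i 1) (EuclideanSpace.single j 1) := by
    intro i j
    rw [hV₂ i j, iteratedFDeriv_two_apply]
    rfl
  have hVsym : V₂ᵀ = V₂ := by
    ext i j
    rw [Matrix.transpose_apply, hV₂', hV₂', hsym]
  refine ⟨hVsym, ?_⟩
  -- the key scalar identity, for every vector x
  have key : ∀ x : Fin n → ℝ,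
      (V₂ *ᵥ x) ⬝ᵥ (A *ᵥ x) + (1/2) * ((Bᵀ *ᵥ (V₂ *ᵥ x)) ⬝ᵥ (Bᵀ *ᵥ (V₂ *ᵥ x)))
        - (η/2) * ((C *ᵥ x) ⬝ᵥ (C *ᵥ x)) = 0 := by
    intro x
    set xE : EuclideanSpace ℝ (Fin n) := toEuc x with hxE
    -- the linear part of the gradient is multiplication by V₂
    have hx0 : xE = ∑ i, xE i • EuclideanSpace.single i (1:ℝ) := by
      have h := (EuclideanSpace.basisFun (Fin n) ℝ).sum_repr xE
      simp only [EuclideanSpace.basisFun_repr, EuclideanSpace.basisFun_apply] at h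
      exact h.symm
    have hL : (ℓ.comp D) xE = toEuc (V₂.mulVec x) := by
      ext j
      have h1 : ((ℓ.comp D) xE) j = ⟪(ℓ.comp D) xE, EuclideanSpace.single j (1:ℝ)⟫ := by
        rw [EuclideanSpace.inner_single_right]; simp
      rw [h1]
      have h2 : ⟪(ℓ.comp D) xE, EuclideanSpace.single j (1:ℝ)⟫
          = D xE (EuclideanSpace.single j 1) := by
        simp [hℓ, InnerProductSpace.toDual_symm_apply]
      rw [h2, ← hsym]
      calc D (EuclideanSpace.single j 1) xE
          = D (EuclideanSpace.single j 1) (∑ i, xE i • EuclideanSpace.single i (1:ℝ)) := by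
            rw [← hx0]
        _ = ∑ i, xE i * D (EuclideanSpace.single j 1) (EuclideanSpace.single i 1) := by
            rw [map_sum]; simp
        _ = ∑ i, V₂ j i * x i := by
            refine Finset.sum_congr rfl fun i _ => ?_
            rw [hV₂' j i]; exact mul_comm _ _
        _ = (V₂.mulVec x) j := rfl
    -- line-derivative limit of the gradient
    have hline : HasLineDerivAt ℝ (fun x => gradient E x) ((ℓ.comp D) xE) 0 xE :=
      hgF.hasLineDerivAt xE
    have htend : Filter.Tendsto (fun t : ℝ => t⁻¹ • gradient E (t • xE)) (nhdsWithin 0 {0}ᶜ)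
        (nhds ((ℓ.comp D) xE)) := by
      have := hasDerivAt_iff_tendsto_slope.1 hline
      simpa [slope_fun_def, hg0, sub_zero] using this
    -- the rescaled HJB functional
    set G : EuclideanSpace ℝ (Fin n) × ℝ → ℝ := fun q =>
      ⟪q.1, toEuc (A.mulVec xE) + q.2 • N xE xE⟫
        + (1/2) * ‖toEuc (Bᵀ.mulVec q.1)‖ ^ 2 - (η/2) * ‖toEuc (C.mulVec xE)‖ ^ 2 with hG
    have hGcont : Continuous G := by
      refine Continuous.sub (Continuous.add ?_ ?_) continuous_const
      · exact continuous_fst.inner (continuous_const.add (continuous_snd.smul continuous_const))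
      · have hBc : Continuous fun q : EuclideanSpace ℝ (Fin n) × ℝ => toEuc (Bᵀ.mulVec q.1) :=
          (matCLM Bᵀ).continuous.comp continuous_fst
        exact continuous_const.mul ((hBc.norm).pow 2)
    have hpair : Filter.Tendsto
        (fun t : ℝ => ((t⁻¹ • gradient E (t • xE) : EuclideanSpace ℝ (Fin n)), t))
        (nhdsWithin 0 {0}ᶜ) (nhds ((ℓ.comp D) xE, 0)) :=
      htend.prodMk_nhds (Filter.tendsto_id.mono_left nhdsWithin_le_nhds)
    have htendG : Filter.Tendsto
        (fun t : ℝ => G ((t⁻¹ • gradient E (t • xE) : EuclideanSpace ℝ (Fin n)), t))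
        (nhdsWithin 0 {0}ᶜ) (nhds (G ((ℓ.comp D) xE, 0))) :=
      (hGcont.tendsto _).comp hpair
    -- the rescaled HJB functional vanishes eventually
    have hsmall : Filter.Tendsto (fun t : ℝ => t • xE) (nhdsWithin 0 {0}ᶜ) (nhds 0) := by
      have h0 : Filter.Tendsto (fun t : ℝ => t • xE) (nhds 0) (nhds ((0:ℝ) • xE)) :=
        (continuous_id.smul continuous_const).tendsto 0
      rw [zero_smul] at h0
      exact h0.mono_left nhdsWithin_le_nhds
    have heq0 : ∀ᶠ t in nhdsWithin (0:ℝ) {0}ᶜ,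
        G ((t⁻¹ • gradient E (t • xE) : EuclideanSpace ℝ (Fin n)), t) = 0 := by
      filter_upwards [hsmall.eventually hHJB, self_mem_nhdsWithin] with t hHt ht
      have ht' : (t:ℝ) ≠ 0 := ht
      simp only [hG]
      set gt : EuclideanSpace ℝ (Fin n) := gradient E (t • xE) with hgt
      have hA : toEuc (A.mulVec (t • xE)) = t • toEuc (A.mulVec xE) := toEuc_mulVec_smul A t xE
      have hC : toEuc (C.mulVec (t • xE)) = t • toEuc (C.mulVec xE) := toEuc_mulVec_smul C t xE
      have hB : toEuc (Bᵀ.mulVec ((t⁻¹ • gt : EuclideanSpace ℝ (Fin n))))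
          = t⁻¹ • toEuc (Bᵀ.mulVec gt) := toEuc_mulVec_smul Bᵀ t⁻¹ gt
      have hN : N (t • xE) (t • xE) = (t * t) • N xE xE := by
        rw [N.map_smul]
        simp [smul_smul]
      rw [WithLp.ofLp_smul, hA, hN] at hHt
      rw [hB]
      have hHt2 : t * ⟪gt, toEuc (A.mulVec xE)⟫ + (t*t) * ⟪gt, N xE xE⟫
          + (1/2) * ‖toEuc (Bᵀ.mulVec gt)‖ ^ 2
          - (η/2) * (t^2 * ‖toEuc (C.mulVec xE)‖ ^ 2) = 0 := by
        have e1 : ⟪gt, t • toEuc (A.mulVec xE) + (t*t) • N xE xE⟫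
            = t * ⟪gt, toEuc (A.mulVec xE)⟫ + (t*t) * ⟪gt, N xE xE⟫ := by
          rw [inner_add_right, real_inner_smul_right, real_inner_smul_right]
        have e2 : ‖toEuc (C.mulVec (t • xE))‖ ^ 2 = t^2 * ‖toEuc (C.mulVec xE)‖ ^ 2 := by
          rw [hC, norm_smul, mul_pow, Real.norm_eq_abs, sq_abs]
        rw [e1, e2] at hHt
        linarith [hHt]
      have e3 : ⟪t⁻¹ • gt, toEuc (A.mulVec xE) + t • N xE xE⟫
          = t⁻¹ * ⟪gt, toEuc (A.mulVec xE)⟫ + t⁻¹ * (t * ⟪gt, N xE xE⟫) := by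
        rw [real_inner_smul_left, inner_add_right, real_inner_smul_right, mul_add]
      have e4 : ‖t⁻¹ • toEuc (Bᵀ.mulVec gt)‖ ^ 2 = (t⁻¹)^2 * ‖toEuc (Bᵀ.mulVec gt)‖ ^ 2 := by
        rw [norm_smul, mul_pow, Real.norm_eq_abs, sq_abs]
      rw [e3, e4]
      have hfinal : t⁻¹ * ⟪gt, toEuc (A.mulVec xE)⟫ + t⁻¹ * (t * ⟪gt, N xE xE⟫)
          + (1/2) * ((t⁻¹)^2 * ‖toEuc (Bᵀ.mulVec gt)‖ ^ 2)
          - (η/2) * ‖toEuc (C.mulVec xE)‖ ^ 2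
          = (t⁻¹)^2 * (t * ⟪gt, toEuc (A.mulVec xE)⟫ + (t*t) * ⟪gt, N xE xE⟫
            + (1/2) * ‖toEuc (Bᵀ.mulVec gt)‖ ^ 2
            - (η/2) * (t^2 * ‖toEuc (C.mulVec xE)‖ ^ 2)) := by
        field_simp
      rw [hfinal, hHt2, mul_zero]
    -- pass to the limit
    have hzero : Filter.Tendsto
        (fun t : ℝ => G ((t⁻¹ • gradient E (t • xE) : EuclideanSpace ℝ (Fin n)), t))
        (nhdsWithin 0 {0}ᶜ) (nhds 0) := by
      refine Filter.Tendsto.congr' ?_ tendsto_const_nhds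
      filter_upwards [heq0] with t h
      exact h.symm
    have hlim0 : G ((ℓ.comp D) xE, 0) = 0 := tendsto_nhds_unique htendG hzero
    simp only [hG] at hlim0
    rw [hL, zero_smul, add_zero] at hlim0
    have hAe : A.mulVec xE = A.mulVec x := rfl
    rw [hAe] at hlim0
    have hCe : C.mulVec xE = C.mulVec x := rfl
    rw [hCe] at hlim0
    rw [inner_toEuc, norm_toEuc_sq, norm_toEuc_sq] at hlim0
    exact hlim0
  -- matrix endgame
  set M : Matrix (Fin n) (Fin n) ℝ := Aᵀ * V₂ + V₂ * A - η • (Cᵀ * C) + V₂ * B * Bᵀ * V₂ with hM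
  have hMsym : Mᵀ = M := by
    simp only [hM, Matrix.transpose_add, Matrix.transpose_sub, Matrix.transpose_mul,
      Matrix.transpose_smul, Matrix.transpose_transpose, hVsym]
    rw [Matrix.mul_assoc, Matrix.mul_assoc]
    abel
  have hquad : ∀ x : Fin n → ℝ, x ⬝ᵥ (M *ᵥ x) = 0 := by
    intro x
    have h1 : x ⬝ᵥ ((Aᵀ * V₂) *ᵥ x) = (V₂ *ᵥ x) ⬝ᵥ (A *ᵥ x) := by
      rw [← Matrix.mulVec_mulVec, Matrix.dotProduct_mulVec, Matrix.vecMul_transpose,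
        dotProduct_comm]
    have h2 : x ⬝ᵥ ((V₂ * A) *ᵥ x) = (V₂ *ᵥ x) ⬝ᵥ (A *ᵥ x) := by
      rw [← Matrix.mulVec_mulVec, Matrix.dotProduct_mulVec, ← Matrix.mulVec_transpose, hVsym]
    have h3 : x ⬝ᵥ ((Cᵀ * C) *ᵥ x) = (C *ᵥ x) ⬝ᵥ (C *ᵥ x) := by
      rw [← Matrix.mulVec_mulVec, Matrix.dotProduct_mulVec, Matrix.vecMul_transpose]
    have h4 : x ⬝ᵥ ((V₂ * B * Bᵀ * V₂) *ᵥ x) = (Bᵀ *ᵥ (V₂ *ᵥ x)) ⬝ᵥ (Bᵀ *ᵥ (V₂ *ᵥ x)) := by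
      have : V₂ * B * Bᵀ * V₂ = (Bᵀ * V₂)ᵀ * (Bᵀ * V₂) := by
        simp [Matrix.transpose_mul, hVsym, Matrix.mul_assoc]
      rw [this, ← Matrix.mulVec_mulVec, Matrix.dotProduct_mulVec, Matrix.vecMul_transpose,
        ← Matrix.mulVec_mulVec]
    have hk := key x
    simp only [hM, Matrix.add_mulVec, Matrix.sub_mulVec, Matrix.smul_mulVec,
      dotProduct_add, dotProduct_sub, dotProduct_smul, h1, h2, h3, h4,
      smul_eq_mul]
    linarith
  ext i j
  have hij := hquad (Pi.single i 1 + Pi.single j 1)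
  have hii := hquad (Pi.single i 1)
  have hjj := hquad (Pi.single j 1)
  have hMji : M j i = M i j := by conv_lhs => rw [← hMsym, Matrix.transpose_apply]
  simp only [Matrix.mulVec_add, dotProduct_add, add_dotProduct,
    Matrix.mulVec_single, single_dotProduct, mul_one, one_mul,
    Pi.smul_apply, op_smul_eq_mul, Matrix.col_apply] at hij hii hjj
  simp only [Matrix.zero_apply]
  linarith
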